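/- Let a ≥ 1 and let A be a Noetherian Z_p-algebra with p^a = 0. Let E(u) ∈ W(k')[u] be an Eisenstein polynomial, let M be a Breuil–Kisin module with A-coefficients, and let N be a finitely generated u-torsion free S_A-module equipped with an S_A-linear map Φ_N : φ*N → N. For i ≥ 0 the submodule u^i M of M is stable under the Φ-structure, and the restriction maps Hom^φ(u^i M, N) → Hom^φ(u^{i+1} M, N) are injective. Moreover, the maps Hom^φ(u^i M, N) → Hom^φ_{S_A[1/u]}(M[1/u], N[1/u]) sending f' to the unique map f with f(m) = u^{−i}·f'(u^i·m) for m ∈ M are injective and compatible as i varies, and every S_A[1/u]-linear map M[1/u] → N[1/u] commuting with the induced Φ-structures arises in this way from some i; that is, the natural map colim_i Hom^φ(u^i M, N) → Hom^φ_{S_A[1/u]}(M[1/u], N[1/u]) is an isomorphism. -/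

import Mathlib

open scoped TensorProduct
open PowerSeries

noncomputable section

variable (p : ℕ) [Fact p.Prime]
variable (k' : Type) [Field k'] [Fintype k'] [CharP k' p]

/-- The canonical ring homomorphism `ℤ_p →+* W(k')`, via `ℤ_p ≃ W(𝔽_p)`. -/
noncomputable def zpToWitt : ℤ_[p] →+* WittVector p k' :=
  (WittVector.map (ZMod.castHom (dvd_refl p) k')).comp (WittVector.equiv p).symm.toRingHom

noncomputable instance : Algebra ℤ_[p] (WittVector p k') :=
  (zpToWitt p k').toAlgebra

/-- The coefficient ring `W(k') ⊗_{ℤ_p} R`. -/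
abbrev WW (R : Type) [CommRing R] [Algebra ℤ_[p] R] : Type :=
  WittVector p k' ⊗[ℤ_[p]] R

/-- `𝔖_R := (W(k') ⊗_{ℤ_p} R)⟦u⟧`. -/
abbrev SS (R : Type) [CommRing R] [Algebra ℤ_[p] R] : Type :=
  PowerSeries (WW p k' R)

/-- `σ` is the Frobenius of `W(k') ⊗_{ℤ_p} R` (the Witt vector Frobenius on `W(k')` and the
identity on `R`), and `φ` is the Frobenius endomorphism of `𝔖_R` (acting as `σ` on
coefficients and sending `u` to `u^p`). -/
def IsFrobeniusLift (R : Type) [CommRing R] [Algebra ℤ_[p] R]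
    (σ : WW p k' R →+* WW p k' R) (φ : SS p k' R →+* SS p k' R) : Prop :=
  (∀ w : WittVector p k',
      σ (w ⊗ₜ[ℤ_[p]] (1 : R)) = (WittVector.frobenius w) ⊗ₜ[ℤ_[p]] (1 : R)) ∧
    (∀ x : R, σ ((1 : WittVector p k') ⊗ₜ[ℤ_[p]] x) = (1 : WittVector p k') ⊗ₜ[ℤ_[p]] x) ∧
    ∀ (g : SS p k' R) (n : ℕ),
      PowerSeries.coeff (R := WW p k' R) n (φ g) =
        if p ∣ n then σ (PowerSeries.coeff (R := WW p k' R) (n / p) g) else 0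

/-- An Eisenstein polynomial of degree `e'` over `W(k')`: monic of degree `e' ≥ 1`, all
non-leading coefficients in `p·W(k')`, constant coefficient not in `p²·W(k')`. -/
def IsEisenstein (e' : ℕ) (E : Polynomial (WittVector p k')) : Prop :=
  E.Monic ∧ E.natDegree = e' ∧ 1 ≤ e' ∧
    (∀ i < e', E.coeff i ∈ Ideal.span {(p : WittVector p k')}) ∧
    E.coeff 0 ∉ Ideal.span {(p : WittVector p k')} ^ 2

/-- The image in `𝔖_R` of a polynomial over `W(k')`. -/
noncomputable def polyToSS (R : Type) [CommRing R] [Algebra ℤ_[p] R]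
    (E : Polynomial (WittVector p k')) : SS p k' R :=
  PowerSeries.mk fun n => (E.coeff n) ⊗ₜ[ℤ_[p]] (1 : R)

/-- The ring homomorphism `R →+* 𝔖_R`, `x ↦ 1 ⊗ x` (a constant power series). -/
noncomputable def AtoSS (R : Type) [CommRing R] [Algebra ℤ_[p] R] : R →+* SS p k' R :=
  (PowerSeries.C (R := WW p k' R)).comp
    (Algebra.TensorProduct.includeRight :
        R →ₐ[ℤ_[p]] WittVector p k' ⊗[ℤ_[p]] R).toRingHom

/-- `(P, ι)` is the base change `φ*M` of `M` along `φ`, characterised by its universal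
property among `φ`-semilinear maps out of `M`. -/
def IsFrobeniusBaseChange {S : Type} [CommRing S] (φ : S →+* S) {M P : Type}
    [AddCommGroup M] [Module S M] [AddCommGroup P] [Module S P] (ι : M →ₛₗ[φ] P) : Prop :=
  ∀ (Q : Type) (_ : AddCommGroup Q) (_ : Module S Q) (g : M →ₛₗ[φ] Q),
    ∃! h : P →ₗ[S] Q, ∀ m : M, h (ι m) = g m

/-- The linearization `1 ⊗ Φ : φ*M → M` of the `φ`-semilinear endomorphism `Φ` of `M`
becomes an isomorphism after inverting `E` (i.e. after localizing at the powers of `E`). -/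
def LinearizationBijectiveAfterInverting {S : Type} [CommRing S] (φ : S →+* S) (E : S)
    {M : Type} [AddCommGroup M] [Module S M] (Φ : M →ₛₗ[φ] M) : Prop :=
  ∃ (P : Type) (_ : AddCommGroup P) (_ : Module S P) (ι : M →ₛₗ[φ] P)
      (Φlin : P →ₗ[S] M),
    IsFrobeniusBaseChange φ ι ∧ (∀ m : M, Φlin (ι m) = Φ m) ∧
      Function.Bijective ⇑(LocalizedModule.map (Submonoid.powers E) Φlin)

variable (A : Type) [CommRing A] [Algebra ℤ_[p] A]

section GenericAux

variable {R : Type} [CommRing R] {M : Type} [AddCommGroup M] [Module R M]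

lemma genPowTf (u : R) (htf : ∀ x : M, u • x = 0 → x = 0) :
    ∀ (n : ℕ) (x : M), u ^ n • x = 0 → x = 0 := by
  intro n
  induction n with
  | zero => intro x hx; simpa using hx
  | succ n ih =>
    intro x hx
    refine htf x (ih (u • x) ?_)
    rw [smul_smul, ← pow_succ]
    exact hx

lemma genCancel (u : R) (i : ℕ) {a b : LocalizedModule (Submonoid.powers u) M}
    (h : u ^ i • a = u ^ i • b) : a = b := by
  have hu : IsUnit (algebraMap R (Localization (Submonoid.powers u)) (u ^ i)) :=
    IsLocalization.map_units (Localization (Submonoid.powers u)) (⟨u ^ i, ⟨i, rfl⟩⟩ : Submonoid.powers u)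
  obtain ⟨v, hv⟩ := hu
  have h' : (v : Localization (Submonoid.powers u)) • a
      = (v : Localization (Submonoid.powers u)) • b := by
    rw [hv, algebraMap_smul, algebraMap_smul]; exact h
  have h'' := congrArg (fun z => (↑v⁻¹ : Localization (Submonoid.powers u)) • z) h'
  simpa [smul_smul, Units.inv_mul] using h''

lemma genMkInj (u : R) (htf : ∀ x : M, u • x = 0 → x = 0) :
    Function.Injective (LocalizedModule.mkLinearMap (Submonoid.powers u) M) := by
  intro x y hxy
  simp only [LocalizedModule.mkLinearMap_apply] at hxy
  rw [LocalizedModule.mk_eq] at hxy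
  obtain ⟨c, hc⟩ := hxy
  simp only [one_smul] at hc
  have hc' : (c : R) • x = (c : R) • y := hc
  obtain ⟨n, hn⟩ := c.2
  have hn' : u ^ n = (c : R) := hn
  have h0 : u ^ n • (x - y) = 0 := by
    rw [smul_sub, hn', hc', sub_self]
  exact sub_eq_zero.mp (genPowTf u htf n (x - y) h0)

lemma genExistsPow (u : R) (z : LocalizedModule (Submonoid.powers u) M) :
    ∃ (j : ℕ) (m : M), u ^ j • z = LocalizedModule.mkLinearMap (Submonoid.powers u) M m := by
  induction z using LocalizedModule.induction_on with
  | _ m s =>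
    obtain ⟨j, hj⟩ := s.2
    have hj' : u ^ j = (s : R) := hj
    refine ⟨j, m, ?_⟩
    rw [LocalizedModule.smul'_mk, LocalizedModule.mkLinearMap_apply, LocalizedModule.mk_eq]
    exact ⟨1, by simp [Submonoid.smul_def, hj']⟩

lemma genMkEq (u : R) (m : M) (s : Submonoid.powers u) :
    (LocalizedModule.mk m s : LocalizedModule (Submonoid.powers u) M)
      = Localization.mk 1 s • LocalizedModule.mkLinearMap (Submonoid.powers u) M m := by
  rw [LocalizedModule.mkLinearMap_apply, LocalizedModule.mk_smul_mk, one_smul, mul_one]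

end GenericAux

theorem main_aux {R : Type} [CommRing R] (u : R) (p : ℕ) (hp : 1 ≤ p)
    (φR : R →+* R) (hu : φR u = u ^ p)
    {M : Type} [AddCommGroup M] [Module R M] [Module.Finite R M]
    (Φ : M →ₛₗ[φR] M)
    {N : Type} [AddCommGroup N] [Module R N]
    (hNtf : ∀ x : N, u • x = 0 → x = 0)
    (ΦN : N →ₛₗ[φR] N)
    (φL : Localization (Submonoid.powers u) →+* Localization (Submonoid.powers u))
    (hφL : ∀ s : R, φL (algebraMap R (Localization (Submonoid.powers u)) s) =
      algebraMap R (Localization (Submonoid.powers u)) (φR s))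
    (ΦM' : LocalizedModule (Submonoid.powers u) M →ₛₗ[φL]
      LocalizedModule (Submonoid.powers u) M)
    (hΦM' : ∀ m : M,
      ΦM' (LocalizedModule.mkLinearMap (Submonoid.powers u) M m) =
        LocalizedModule.mkLinearMap (Submonoid.powers u) M (Φ m))
    (ΦN' : LocalizedModule (Submonoid.powers u) N →ₛₗ[φL]
      LocalizedModule (Submonoid.powers u) N)
    (hΦN' : ∀ x : N,
      ΦN' (LocalizedModule.mkLinearMap (Submonoid.powers u) N x) =
        LocalizedModule.mkLinearMap (Submonoid.powers u) N (ΦN x)) :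
    let U : ℕ → Submodule R M := fun i =>
      LinearMap.range (LinearMap.lsmul R M (u ^ i))
    let mkM := LocalizedModule.mkLinearMap (Submonoid.powers u) M
    let mkN := LocalizedModule.mkLinearMap (Submonoid.powers u) N
    let Comm : (i : ℕ) → (↥(U i) →ₗ[R] N) → Prop := fun i g =>
      ∀ (x : M) (hx : x ∈ U i) (hx' : Φ x ∈ U i), g ⟨Φ x, hx'⟩ = ΦN (g ⟨x, hx⟩)
    let Mat : (i : ℕ) → (↥(U i) →ₗ[R] N) →
        (LocalizedModule (Submonoid.powers u) M
          →ₗ[Localization (Submonoid.powers u)]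
          LocalizedModule (Submonoid.powers u) N) → Prop :=
      fun i g f => ∀ (m : M) (hm : u ^ i • m ∈ U i),
        u ^ i • f (mkM m) = mkN (g ⟨u ^ i • m, hm⟩)
    (∀ (i : ℕ) (x : M), x ∈ U i → Φ x ∈ U i) ∧
    (∀ (i : ℕ) (g g' : ↥(U i) →ₗ[R] N), Comm i g → Comm i g' →
      (∀ (x : M) (hx1 : x ∈ U (i + 1)) (hx0 : x ∈ U i), g ⟨x, hx0⟩ = g' ⟨x, hx0⟩) →
      g = g') ∧
    (∀ (i : ℕ) (g : ↥(U i) →ₗ[R] N), Comm i g → ∃! f, Mat i g f) ∧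
    (∀ (i : ℕ) (g : ↥(U i) →ₗ[R] N) f, Comm i g → Mat i g f →
      ∀ z, f (ΦM' z) = ΦN' (f z)) ∧
    (∀ (i : ℕ) (g g' : ↥(U i) →ₗ[R] N) f, Comm i g → Comm i g' →
      Mat i g f → Mat i g' f → g = g') ∧
    (∀ (i : ℕ) (g : ↥(U i) →ₗ[R] N) (g₁ : ↥(U (i + 1)) →ₗ[R] N) f,
      Comm i g → Comm (i + 1) g₁ →
      (∀ (x : M) (hx1 : x ∈ U (i + 1)) (hx0 : x ∈ U i), g₁ ⟨x, hx1⟩ = g ⟨x, hx0⟩) →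
      Mat i g f → Mat (i + 1) g₁ f) ∧
    (∀ f, (∀ z, f (ΦM' z) = ΦN' (f z)) →
      ∃ (i : ℕ) (g : ↥(U i) →ₗ[R] N), Comm i g ∧ Mat i g f) := by
  intro U mkM mkN Comm Mat
  have hS : ∀ i : ℕ, u ^ i ∈ Submonoid.powers u := fun i => ⟨i, rfl⟩
  have memU : ∀ (i : ℕ) (m : M), u ^ i • m ∈ U i := fun i m =>
    LinearMap.mem_range.mpr ⟨m, rfl⟩
  have exU : ∀ (i : ℕ) (x : M), x ∈ U i → ∃ m, u ^ i • m = x := by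
    intro i x hx
    obtain ⟨m, hm⟩ := LinearMap.mem_range.mp hx
    exact ⟨m, hm⟩
  have hmkM : ∀ m : M, mkM m = LocalizedModule.mk m 1 := fun _ => rfl
  have hmkN : ∀ n : N, mkN n = LocalizedModule.mk n 1 := fun _ => rfl
  have hΦM2 : ∀ m : M, ΦM' (mkM m) = mkM (Φ m) := hΦM'
  have hΦN2 : ∀ x : N, ΦN' (mkN x) = mkN (ΦN x) := hΦN'
  have hmk2 : ∀ (m : M) (s : Submonoid.powers u),
      (LocalizedModule.mk m s : LocalizedModule (Submonoid.powers u) M)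
        = Localization.mk 1 s • mkM m := genMkEq u
  have hinjN : Function.Injective mkN := genMkInj u hNtf
  have hqi : ∀ i : ℕ, i + (p * i - i) = p * i := fun i =>
    Nat.add_sub_cancel' (Nat.le_mul_of_pos_left i (by omega))
  have hupow : ∀ i : ℕ, φR (u ^ i) = u ^ (p * i) := fun i => by
    rw [map_pow, hu, ← pow_mul]
  have hstab : ∀ (i : ℕ) (m : M), Φ (u ^ i • m) = u ^ i • u ^ (p * i - i) • Φ m := by
    intro i m
    rw [Φ.map_smulₛₗ, hupow, smul_smul, ← pow_add, hqi]
  have hfR : ∀ (f : LocalizedModule (Submonoid.powers u) M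
        →ₗ[Localization (Submonoid.powers u)] LocalizedModule (Submonoid.powers u) N)
      (c : R) (z : LocalizedModule (Submonoid.powers u) M), f (c • z) = c • f z := by
    intro f c z
    rw [← algebraMap_smul (Localization (Submonoid.powers u)) c z, map_smul, algebraMap_smul]
  have hΦN'c : ∀ (c : R) (z : LocalizedModule (Submonoid.powers u) N),
      ΦN' (c • z) = φR c • ΦN' z := by
    intro c z
    rw [← algebraMap_smul (Localization (Submonoid.powers u)) c z, ΦN'.map_smulₛₗ, hφL,
      algebraMap_smul]
  refine ⟨?_, ?_, ?_, ?_, ?_, ?_, ?_⟩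
  -- (i)
  · intro i x hx
    obtain ⟨m, rfl⟩ := exU i x hx
    rw [hstab]
    exact memU i _
  -- (ii)
  · intro i g g' _ _ hagree
    apply LinearMap.ext
    rintro ⟨x, hx⟩
    obtain ⟨m, rfl⟩ := exU i x hx
    have h0 : u • u ^ i • m ∈ U i := by
      rw [smul_comm]; exact memU i _
    have h1 : u • u ^ i • m ∈ U (i + 1) := by
      rw [smul_smul, ← pow_succ']; exact memU (i + 1) m
    have key := hagree (u • u ^ i • m) h1 h0
    have e1 : (⟨u • u ^ i • m, h0⟩ : U i) = u • (⟨u ^ i • m, hx⟩ : U i) := rfl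
    rw [e1, map_smul, map_smul] at key
    exact sub_eq_zero.mp (hNtf _ (by rw [smul_sub, key, sub_self]))
  -- (iii)
  · intro i g hComm
    have hsub_add : ∀ m m' : M, (⟨u ^ i • (m + m'), memU i (m + m')⟩ : U i)
        = ⟨u ^ i • m, memU i m⟩ + ⟨u ^ i • m', memU i m'⟩ :=
      fun m m' => Subtype.ext (smul_add _ _ _)
    have hsub_smul : ∀ (c : R) (m : M), (⟨u ^ i • (c • m), memU i (c • m)⟩ : U i)
        = c • (⟨u ^ i • m, memU i m⟩ : U i) := fun c m => Subtype.ext (smul_comm _ _ _)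
    set h : M →ₗ[R] N :=
      { toFun := fun m => g ⟨u ^ i • m, memU i m⟩
        map_add' := fun m m' => by
          show g ⟨u ^ i • (m + m'), memU i (m + m')⟩
            = g ⟨u ^ i • m, memU i m⟩ + g ⟨u ^ i • m', memU i m'⟩
          rw [hsub_add, map_add]
        map_smul' := fun c m => by
          show g ⟨u ^ i • (c • m), memU i (c • m)⟩ = c • g ⟨u ^ i • m, memU i m⟩
          rw [hsub_smul, map_smul] } with hdef
    have hval : ∀ (m : M) (hm : u ^ i • m ∈ U i), h m = g ⟨u ^ i • m, hm⟩ := fun m hm => rfl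
    set f₀ := LocalizedModule.map (Submonoid.powers u) h with hf₀
    set cinv : Localization (Submonoid.powers u) :=
      Localization.mk 1 ⟨u ^ i, hS i⟩ with hcinv
    have hunit : algebraMap R (Localization (Submonoid.powers u)) (u ^ i) * cinv = 1 := by
      rw [hcinv, ← Localization.mk_one_eq_algebraMap, Localization.mk_mul, mul_one, one_mul]
      exact Localization.mk_self (⟨u ^ i, hS i⟩ : Submonoid.powers u)
    set f := cinv • f₀ with hf
    have hkey : ∀ m : M, u ^ i • f (mkM m) = mkN (h m) := by
      intro m
      have h1 : f₀ (mkM m) = mkN (h m) := by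
        rw [hmkM, hmkN, hf₀, LocalizedModule.map_mk]
      rw [hf, LinearMap.smul_apply, h1,
        ← algebraMap_smul (Localization (Submonoid.powers u)) (u ^ i) (cinv • mkN (h m)),
        smul_smul, hunit, one_smul]
    refine ⟨f, ?_, ?_⟩
    · intro m hm
      rw [hkey m, hval m hm]
    · intro f' hf'
      have hgen : ∀ m : M, f' (mkM m) = f (mkM m) := by
        intro m
        refine genCancel u i ?_
        rw [hf' m (memU i m), hkey m, hval m (memU i m)]
      apply LinearMap.ext
      intro z
      induction z using LocalizedModule.induction_on with
      | _ m s =>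
        rw [hmk2 m s, map_smul, map_smul]
        exact congrArg (fun y => Localization.mk 1 s • y) (hgen m)
  -- (iv)
  · intro i g f hComm hMat
    have hgen : ∀ m : M, f (mkM (Φ m)) = ΦN' (f (mkM m)) := by
      intro m
      refine genCancel u (p * i) ?_
      have e1 : u ^ (p * i) • f (mkM (Φ m))
          = u ^ i • f (mkM (u ^ (p * i - i) • Φ m)) := by
        rw [map_smul, hfR, smul_smul, ← pow_add, hqi]
      have hm' : u ^ i • (u ^ (p * i - i) • Φ m) ∈ U i := memU i _
      have hx : u ^ i • m ∈ U i := memU i m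
      have hx' : Φ (u ^ i • m) ∈ U i := by rw [hstab]; exact memU i _
      have e3 : (⟨u ^ i • (u ^ (p * i - i) • Φ m), hm'⟩ : U i) = ⟨Φ (u ^ i • m), hx'⟩ :=
        Subtype.ext (hstab i m).symm
      calc u ^ (p * i) • f (mkM (Φ m))
          = mkN (g ⟨u ^ i • (u ^ (p * i - i) • Φ m), hm'⟩) := by
            rw [e1]; exact hMat _ hm'
        _ = mkN (ΦN (g ⟨u ^ i • m, hx⟩)) := by rw [e3, hComm _ hx hx']
        _ = ΦN' (mkN (g ⟨u ^ i • m, hx⟩)) := (hΦN2 _).symm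
        _ = ΦN' (u ^ i • f (mkM m)) := by rw [hMat m hx]
        _ = u ^ (p * i) • ΦN' (f (mkM m)) := by rw [hΦN'c, hupow]
    intro z
    induction z using LocalizedModule.induction_on with
    | _ m s =>
      rw [hmk2 m s, ΦM'.map_smulₛₗ, hΦM2, map_smul, map_smul, ΦN'.map_smulₛₗ]
      exact congrArg (fun y => φL (Localization.mk 1 s) • y) (hgen m)
  -- (v)
  · intro i g g' f _ _ hM hM'
    apply LinearMap.ext
    rintro ⟨x, hx⟩
    obtain ⟨m, rfl⟩ := exU i x hx
    apply hinjN
    rw [← hM m hx, ← hM' m hx]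
  -- (vi)
  · intro i g g₁ f _ _ hres hMat m hm
    have h0 : u ^ (i + 1) • m ∈ U i := by
      rw [pow_succ, mul_smul]
      exact memU i _
    have e1 : (⟨u ^ (i + 1) • m, h0⟩ : U i) = u • (⟨u ^ i • m, memU i m⟩ : U i) := by
      refine Subtype.ext ?_
      show u ^ (i + 1) • m = u • u ^ i • m
      rw [smul_smul, ← pow_succ']
    calc u ^ (i + 1) • f (mkM m) = u • u ^ i • f (mkM m) := by rw [smul_smul, ← pow_succ']
      _ = u • mkN (g ⟨u ^ i • m, memU i m⟩) := by rw [hMat m (memU i m)]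
      _ = mkN (g ⟨u ^ (i + 1) • m, h0⟩) := by rw [e1, map_smul g, map_smul mkN]
      _ = mkN (g₁ ⟨u ^ (i + 1) • m, hm⟩) := by rw [hres _ hm h0]
  -- (vii)
  · intro f hf
    obtain ⟨s, hs⟩ := Module.Finite.fg_top (R := R) (M := M)
    choose jf nf hjf using fun m : M => genExistsPow u (f (mkM m))
    have hjf2 : ∀ m : M, u ^ jf m • f (mkM m) = mkN (nf m) := hjf
    set j := s.sup jf with hj
    set F : M →ₗ[R] LocalizedModule (Submonoid.powers u) N :=
      { toFun := fun m => u ^ j • f (mkM m)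
        map_add' := fun x y => by
          show u ^ j • f (mkM (x + y)) = u ^ j • f (mkM x) + u ^ j • f (mkM y)
          rw [map_add, map_add, smul_add]
        map_smul' := fun c x => by
          show u ^ j • f (mkM (c • x)) = c • (u ^ j • f (mkM x))
          rw [map_smul, hfR, smul_comm] } with hF
    have hFapp : ∀ m : M, F m = u ^ j • f (mkM m) := fun m => rfl
    have hFrange : ∀ m : M, F m ∈ LinearMap.range mkN := by
      have hspan : Submodule.span R (s : Set M) ≤ Submodule.comap F (LinearMap.range mkN) := by
        rw [Submodule.span_le]
        intro m hm
        simp only [SetLike.mem_coe, Submodule.mem_comap]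
        have hjle : jf m ≤ j := Finset.le_sup (Finset.mem_coe.mp hm)
        have e1 : F m = u ^ (j - jf m) • (u ^ jf m • f (mkM m)) := by
          rw [hFapp, smul_smul, ← pow_add, Nat.sub_add_cancel hjle]
        rw [e1, hjf2 m]
        exact LinearMap.mem_range.mpr ⟨u ^ (j - jf m) • nf m, map_smul mkN _ _⟩
      intro m
      exact hspan (by rw [hs]; trivial)
    set e : N ≃ₗ[R] LinearMap.range mkN := LinearEquiv.ofInjective mkN hinjN with he
    set h : M →ₗ[R] N :=
      e.symm.toLinearMap ∘ₗ LinearMap.codRestrict (LinearMap.range mkN) F hFrange with hh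
    have hmkh : ∀ m : M, mkN (h m) = u ^ j • f (mkM m) := by
      intro m
      have h1 : e (h m) = ⟨F m, hFrange m⟩ := by
        show e (e.symm ⟨F m, hFrange m⟩) = _
        exact e.apply_symm_apply _
      have h2 : (e (h m) : LocalizedModule (Submonoid.powers u) N) = mkN (h m) := by
        rw [he]
        exact LinearEquiv.ofInjective_apply mkN (h := hinjN) (h m)
      rw [← h2, h1]
      exact hFapp m
    set ℓ : M →ₗ[R] M := LinearMap.lsmul R M (u ^ j) with hℓ
    have hker : LinearMap.ker ℓ ≤ LinearMap.ker h := by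
      intro m hm
      have hm0 : u ^ j • m = 0 := LinearMap.mem_ker.mp hm
      have h1 : mkN (h m) = mkN 0 := by
        rw [hmkh, ← hfR, ← map_smul, hm0, map_zero, map_zero, map_zero]
      exact LinearMap.mem_ker.mpr (hinjN h1)
    set gq := Submodule.liftQ (LinearMap.ker ℓ) h hker with hgq
    set eqv := LinearMap.quotKerEquivRange ℓ with heqv
    set g : ↥(U j) →ₗ[R] N := gq ∘ₗ eqv.symm.toLinearMap with hg
    have hgval : ∀ (m : M) (hm : u ^ j • m ∈ U j), g ⟨u ^ j • m, hm⟩ = h m := by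
      intro m hm
      have h1 : eqv (Submodule.Quotient.mk m) = ⟨u ^ j • m, hm⟩ :=
        Subtype.ext (LinearMap.quotKerEquivRange_apply_mk ℓ m)
      have h2 : eqv.symm ⟨u ^ j • m, hm⟩ = Submodule.Quotient.mk m := by
        rw [← h1, LinearEquiv.symm_apply_apply]
      show gq (eqv.symm ⟨u ^ j • m, hm⟩) = h m
      rw [h2]
      exact Submodule.liftQ_apply _ h m
    refine ⟨j, g, ?_, ?_⟩
    · -- Comm j g
      intro x hx hx'
      obtain ⟨m, rfl⟩ := exU j x hx
      have e2 : (⟨Φ (u ^ j • m), hx'⟩ : U j)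
          = ⟨u ^ j • (u ^ (p * j - j) • Φ m), memU j (u ^ (p * j - j) • Φ m)⟩ :=
        Subtype.ext (hstab j m)
      rw [e2, hgval (u ^ (p * j - j) • Φ m) (memU j (u ^ (p * j - j) • Φ m)), hgval m hx]
      apply hinjN
      calc mkN (h (u ^ (p * j - j) • Φ m))
          = u ^ j • f (mkM (u ^ (p * j - j) • Φ m)) := hmkh _
        _ = u ^ (p * j) • f (mkM (Φ m)) := by
            rw [map_smul, hfR, smul_smul, ← pow_add, hqi]
        _ = u ^ (p * j) • f (ΦM' (mkM m)) := by rw [hΦM2]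
        _ = u ^ (p * j) • ΦN' (f (mkM m)) := by rw [hf (mkM m)]
        _ = ΦN' (u ^ j • f (mkM m)) := by rw [hΦN'c, hupow]
        _ = ΦN' (mkN (h m)) := by rw [hmkh m]
        _ = mkN (ΦN (h m)) := hΦN2 _
    · -- Mat j g f
      intro m hm
      rw [hgval m hm]
      exact (hmkh m).symm

/-- Let `A` be Noetherian with `p^a = 0` (`a ≥ 1`), `M` a Breuil–Kisin
module with `A`-coefficients, and `N` a finitely generated `u`-torsion free `𝔖_A`-module
with Frobenius `Φ_N`.  The submodules `u^iM` are stable under the Frobenius; the restriction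
maps `Hom^φ(u^iM, N) → Hom^φ(u^{i+1}M, N)` are injective; each `g ∈ Hom^φ(u^iM, N)`
determines a unique `f ∈ Hom^φ_{𝔖_A[1/u]}(M[1/u], N[1/u])` with `f(m) = u^{-i}·g(u^i·m)`
(i.e. `u^i·f(m) = g(u^i·m)` in `N[1/u]`); the maps `g ↦ f` are injective and compatible as
`i` varies; and every `Φ`-equivariant `f : M[1/u] → N[1/u]` arises this way.  That is, the
natural map `colim_i Hom^φ(u^iM, N) → Hom^φ_{𝔖_A[1/u]}(M[1/u], N[1/u])` is an
isomorphism. -/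
theorem statement_9
    (σ : WW p k' A →+* WW p k' A) (φS : SS p k' A →+* SS p k' A)
    (hφ : IsFrobeniusLift p k' A σ φS)
    [IsNoetherianRing A] (a : ℕ) (ha1 : 1 ≤ a) (ha : (p : A) ^ a = 0)
    (e' : ℕ) (E : Polynomial (WittVector p k')) (hE : IsEisenstein p k' e' E)
    (M : Type) [AddCommGroup M] [Module (SS p k' A) M]
    [Module.Finite (SS p k' A) M] [Module.Projective (SS p k' A) M]
    (Φ : M →ₛₗ[φS] M)
    (hMiso : LinearizationBijectiveAfterInverting φS (polyToSS p k' A E) Φ)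
    (N : Type) [AddCommGroup N] [Module (SS p k' A) N]
    [Module.Finite (SS p k' A) N]
    (hNtf : ∀ x : N, (PowerSeries.X : SS p k' A) • x = 0 → x = 0)
    (ΦN : N →ₛₗ[φS] N)
    -- the Frobenius on `𝔖_A[1/u]` and the induced Frobenii on `M[1/u]`, `N[1/u]`:
    (φS' : Localization (Submonoid.powers (PowerSeries.X : SS p k' A)) →+*
      Localization (Submonoid.powers (PowerSeries.X : SS p k' A)))
    (hφS' : ∀ s : SS p k' A,
      φS' (algebraMap (SS p k' A) (Localization (Submonoid.powers (PowerSeries.X : SS p k' A))) s) =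
        algebraMap (SS p k' A) (Localization (Submonoid.powers (PowerSeries.X : SS p k' A))) (φS s))
    (ΦM' : LocalizedModule (Submonoid.powers (PowerSeries.X : SS p k' A)) M →ₛₗ[φS']
      LocalizedModule (Submonoid.powers (PowerSeries.X : SS p k' A)) M)
    (hΦM' : ∀ m : M,
      ΦM' (LocalizedModule.mkLinearMap (Submonoid.powers (PowerSeries.X : SS p k' A)) M m) =
        LocalizedModule.mkLinearMap (Submonoid.powers (PowerSeries.X : SS p k' A)) M (Φ m))
    (ΦN' : LocalizedModule (Submonoid.powers (PowerSeries.X : SS p k' A)) N →ₛₗ[φS']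
      LocalizedModule (Submonoid.powers (PowerSeries.X : SS p k' A)) N)
    (hΦN' : ∀ x : N,
      ΦN' (LocalizedModule.mkLinearMap (Submonoid.powers (PowerSeries.X : SS p k' A)) N x) =
        LocalizedModule.mkLinearMap (Submonoid.powers (PowerSeries.X : SS p k' A)) N (ΦN x)) :
    -- `U i` is the submodule `u^i M ⊆ M`
    let U : ℕ → Submodule (SS p k' A) M := fun i =>
      LinearMap.range (LinearMap.lsmul (SS p k' A) M ((PowerSeries.X : SS p k' A) ^ i))
    let mkM := LocalizedModule.mkLinearMap (Submonoid.powers (PowerSeries.X : SS p k' A)) M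
    let mkN := LocalizedModule.mkLinearMap (Submonoid.powers (PowerSeries.X : SS p k' A)) N
    -- `Comm i g` says that `g : u^iM → N` commutes with the Frobenii
    let Comm : (i : ℕ) → (↥(U i) →ₗ[SS p k' A] N) → Prop := fun i g =>
      ∀ (x : M) (hx : x ∈ U i) (hx' : Φ x ∈ U i), g ⟨Φ x, hx'⟩ = ΦN (g ⟨x, hx⟩)
    -- `Mat i g f` says that `f : M[1/u] → N[1/u]` corresponds to `g : u^iM → N`, i.e.
    -- `u^i · f(m) = g(u^i·m)` for all `m`
    let Mat : (i : ℕ) → (↥(U i) →ₗ[SS p k' A] N) →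
        (LocalizedModule (Submonoid.powers (PowerSeries.X : SS p k' A)) M
          →ₗ[Localization (Submonoid.powers (PowerSeries.X : SS p k' A))]
          LocalizedModule (Submonoid.powers (PowerSeries.X : SS p k' A)) N) → Prop :=
      fun i g f => ∀ (m : M) (hm : (PowerSeries.X : SS p k' A) ^ i • m ∈ U i),
        (PowerSeries.X : SS p k' A) ^ i • f (mkM m) =
          mkN (g ⟨(PowerSeries.X : SS p k' A) ^ i • m, hm⟩)
    -- (i) stability of `u^iM` under the Frobenius:
    (∀ (i : ℕ) (x : M), x ∈ U i → Φ x ∈ U i) ∧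
    -- (ii) injectivity of the restriction maps `Hom^φ(u^iM,N) → Hom^φ(u^{i+1}M,N)`:
    (∀ (i : ℕ) (g g' : ↥(U i) →ₗ[SS p k' A] N), Comm i g → Comm i g' →
      (∀ (x : M) (hx1 : x ∈ U (i + 1)) (hx0 : x ∈ U i), g ⟨x, hx0⟩ = g' ⟨x, hx0⟩) →
      g = g') ∧
    -- (iii) each `g` determines a unique `f`:
    (∀ (i : ℕ) (g : ↥(U i) →ₗ[SS p k' A] N), Comm i g → ∃! f, Mat i g f) ∧
    -- (iv) the resulting `f` is `Φ`-equivariant: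
    (∀ (i : ℕ) (g : ↥(U i) →ₗ[SS p k' A] N) f, Comm i g → Mat i g f →
      ∀ z, f (ΦM' z) = ΦN' (f z)) ∧
    -- (v) the maps `g ↦ f` are injective:
    (∀ (i : ℕ) (g g' : ↥(U i) →ₗ[SS p k' A] N) f, Comm i g → Comm i g' →
      Mat i g f → Mat i g' f → g = g') ∧
    -- (vi) the maps `g ↦ f` are compatible as `i` varies:
    (∀ (i : ℕ) (g : ↥(U i) →ₗ[SS p k' A] N) (g₁ : ↥(U (i + 1)) →ₗ[SS p k' A] N) f,
      Comm i g → Comm (i + 1) g₁ →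
      (∀ (x : M) (hx1 : x ∈ U (i + 1)) (hx0 : x ∈ U i), g₁ ⟨x, hx1⟩ = g ⟨x, hx0⟩) →
      Mat i g f → Mat (i + 1) g₁ f) ∧
    -- (vii) every `Φ`-equivariant `f` arises from some `i` and `g`:
    (∀ f, (∀ z, f (ΦM' z) = ΦN' (f z)) →
      ∃ (i : ℕ) (g : ↥(U i) →ₗ[SS p k' A] N), Comm i g ∧ Mat i g f) := by
  have hp1 : 1 ≤ p := (Fact.out : p.Prime).one_lt.le
  have hXp : φS (PowerSeries.X : SS p k' A) = (PowerSeries.X : SS p k' A) ^ p := by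
    have hp0 : 0 < p := (Fact.out : p.Prime).pos
    ext n
    rw [hφ.2.2 PowerSeries.X n, PowerSeries.coeff_X_pow]
    by_cases hdvd : p ∣ n
    · obtain ⟨c, rfl⟩ := hdvd
      rw [if_pos ⟨c, rfl⟩, Nat.mul_div_cancel_left c hp0, PowerSeries.coeff_X]
      by_cases hc : c = 1
      · subst hc
        rw [if_pos rfl, map_one, if_pos (mul_one p)]
      · rw [if_neg hc, map_zero, if_neg]
        intro hpc
        exact hc (Nat.eq_of_mul_eq_mul_left hp0 (by rw [hpc, mul_one]))
    · rw [if_neg hdvd, if_neg]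
      rintro rfl
      exact hdvd dvd_rfl
  exact main_aux (PowerSeries.X : SS p k' A) p hp1 φS hXp Φ hNtf ΦN φS' hφS' ΦM' hΦM' ΦN' hΦN'
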